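/- (Andrásfai–Erdős–Sós) Let r ≥ 2 be an integer and let G be a K_{r+1}-free simple graph on n vertices with minimum degree δ(G) > ((3r−4)/(3r−1))·n. Then G is r-colourable, i.e., there is a graph homomorphism from G to K_r. -/

import Mathlib

open Finset SimpleGraph

section AuxAES

variable {V : Type*}

/-- In a maximal `K_{m+3}`-free graph, any two distinct non-adjacent vertices have a common
clique of size `m+1` in their joint neighbourhood. -/
lemma aes_common_clique (H : SimpleGraph V) (m : ℕ)
    (hmax : Maximal (fun K : SimpleGraph V => K.CliqueFree (m + 3)) H)
    {u w : V} (hne : u ≠ w) (hnadj : ¬ H.Adj u w) :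
    ∃ S : Finset V, S.card = m + 1 ∧ H.IsClique ↑S ∧ ∀ x ∈ S, H.Adj u x ∧ H.Adj w x := by
  classical
  set H' := H ⊔ SimpleGraph.fromEdgeSet {s(u, w)} with hH'def
  have hadj' : ∀ a b : V, H'.Adj a b ↔ H.Adj a b ∨ (s(a, b) = s(u, w) ∧ a ≠ b) := by
    intro a b
    simp only [hH'def, SimpleGraph.sup_adj, SimpleGraph.fromEdgeSet_adj, Set.mem_singleton_iff]
  have hlt : H < H' := by
    refine lt_of_le_of_ne le_sup_left ?_
    intro hEq
    apply hnadj
    have : H'.Adj u w := by rw [hadj']; exact Or.inr ⟨rfl, hne⟩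
    rwa [← hEq] at this
  have hnotfree : ¬ H'.CliqueFree (m + 3) := hmax.not_prop_of_gt hlt
  rw [SimpleGraph.CliqueFree] at hnotfree
  push_neg at hnotfree
  obtain ⟨S', hS'⟩ := hnotfree
  have hfree := hmax.prop
  -- both u and w must belong to S'
  have huw : u ∈ S' ∧ w ∈ S' := by
    by_contra hcon
    apply hfree S'
    refine ⟨?_, hS'.card_eq⟩
    intro a ha b hb hab
    have h := hS'.isClique ha hb hab
    rw [hadj'] at h
    rcases h with h | ⟨hs, _⟩
    · exact h
    · exfalso
      rw [Sym2.eq_iff] at hs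
      apply hcon
      rcases hs with ⟨rfl, rfl⟩ | ⟨rfl, rfl⟩
      · exact ⟨ha, hb⟩
      · exact ⟨hb, ha⟩
  -- the common clique
  refine ⟨(S'.erase u).erase w, ?_, ?_, ?_⟩
  · rw [card_erase_of_mem (mem_erase.2 ⟨hne.symm, huw.2⟩), card_erase_of_mem huw.1,
      hS'.card_eq]
    omega
  · intro a ha b hb hab
    simp only [coe_erase, Set.mem_diff, mem_coe, Set.mem_singleton_iff] at ha hb
    obtain ⟨⟨ha', hau⟩, haw⟩ := ha
    obtain ⟨⟨hb', hbu⟩, hbw⟩ := hb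
    have h := hS'.isClique ha' hb' hab
    rw [hadj'] at h
    rcases h with h | ⟨hs, _⟩
    · exact h
    · exfalso
      rw [Sym2.eq_iff] at hs
      rcases hs with ⟨rfl, _⟩ | ⟨rfl, _⟩
      · exact hau rfl
      · exact haw rfl
  · intro x hx
    rw [mem_erase, mem_erase] at hx
    obtain ⟨hxw, hxu, hxS⟩ := hx
    constructor
    · have h := hS'.isClique huw.1 hxS (Ne.symm hxu)
      rw [hadj'] at h
      rcases h with h | ⟨hs, _⟩
      · exact h
      · exfalso
        rw [Sym2.eq_iff] at hs
        rcases hs with ⟨_, rfl⟩ | ⟨rfl, _⟩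
        · exact hxw rfl
        · exact hne rfl
    · have h := hS'.isClique huw.2 hxS (Ne.symm hxw)
      rw [hadj'] at h
      rcases h with h | ⟨hs, _⟩
      · exact h
      · exfalso
        rw [Sym2.eq_iff] at hs
        rcases hs with ⟨rfl, _⟩ | ⟨_, rfl⟩
        · exact hne rfl
        · exact hxu rfl

/-- If non-adjacency is "transitive" (no induced complement of a path on 3 vertices) in a
`K_{r+1}`-free graph, then the graph is `r`-colourable. -/
lemma aes_colorable_of_no_P3bar [Fintype V] (H : SimpleGraph V) (r : ℕ)
    (hfree : H.CliqueFree (r + 1))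
    (hP : ∀ a b c : V, H.Adj b c → ¬ H.Adj a b → ¬ H.Adj a c → False) :
    H.Colorable r := by
  classical
  let st : Setoid V := ⟨fun a b => ¬ H.Adj a b,
    fun a => H.irrefl,
    fun {a b} h hadj => h hadj.symm,
    fun {a b c} hab hbc hac => hP b a c hac (fun h => hab h.symm) hbc⟩
  haveI : DecidableRel st.r := fun _ _ => Classical.dec _
  have hvalid : ∀ {a b : V}, H.Adj a b → (Quotient.mk st a) ≠ (Quotient.mk st b) := by
    intro a b hadj hEq
    exact (Quotient.exact hEq : ¬ H.Adj a b) hadj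
  have hcard : Fintype.card (Quotient st) ≤ r := by
    by_contra hlt
    push_neg at hlt
    obtain ⟨s, _, hscard⟩ := Finset.exists_subset_card_eq (s := (univ : Finset (Quotient st))) (n := r + 1)
      (by rwa [card_univ])
    apply hfree (s.image Quotient.out)
    constructor
    · intro a ha b hb hab
      simp only [coe_image, Set.mem_image, mem_coe] at ha hb
      obtain ⟨qa, _, rfl⟩ := ha
      obtain ⟨qb, _, rfl⟩ := hb
      by_contra hnadj
      have : Quotient.mk st qa.out = Quotient.mk st qb.out := Quotient.sound hnadj
      rw [Quotient.out_eq, Quotient.out_eq] at this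
      exact hab (by rw [this])
    · rw [Finset.card_image_of_injective _ Quotient.out_injective, hscard]
  exact (SimpleGraph.Coloring.mk _ hvalid).colorable.mono hcard

/-- Degree-counting: the number of neighbours a vertex has in a clique of size `m+2` of a
`K_{m+3}`-free graph is at most `m+1`. -/
lemma aes_clique_cap [Fintype V] (H : SimpleGraph V) [DecidableRel H.Adj] (m : ℕ)
    (hfree : H.CliqueFree (m + 3)) (u : V) (C : Finset V) (hcard : C.card = m + 2)
    (hclq : H.IsClique ↑C) : (C.filter (fun x => H.Adj u x)).card ≤ m + 1 := by
  classical
  by_contra hcon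
  push_neg at hcon
  have hsub : C.filter (fun x => H.Adj u x) ⊆ C := filter_subset _ _
  have hEq : C.filter (fun x => H.Adj u x) = C := by
    apply Finset.eq_of_subset_of_card_le hsub
    have := Finset.card_le_card hsub
    omega
  have hall : ∀ x ∈ C, H.Adj u x := by
    intro x hx
    rw [← hEq] at hx
    exact (mem_filter.1 hx).2
  have huC : u ∉ C := fun h => H.irrefl (hall u h)
  apply hfree (insert u C)
  constructor
  · rw [coe_insert]
    apply hclq.insert
    intro b hb _
    exact hall b (mem_coe.1 hb)
  · rw [card_insert_of_notMem huC, hcard]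

end AuxAES

section MainAES

variable {V : Type*} [Fintype V]

/-- The sum over all vertices `u` of the number of neighbours of `u` inside `S` equals the sum
of degrees over `S`. -/
lemma aes_sum_filter_deg (H : SimpleGraph V) [DecidableRel H.Adj] (S : Finset V) :
    (∑ u : V, (S.filter (fun x => H.Adj u x)).card) = ∑ x ∈ S, H.degree x := by
  classical
  simp_rw [Finset.card_filter]
  rw [Finset.sum_comm]
  refine Finset.sum_congr rfl fun x _ => ?_
  rw [← Finset.card_filter]
  have : (univ.filter fun u => H.Adj u x) = H.neighborFinset x := by
    rw [neighborFinset_eq_filter]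
    apply Finset.filter_congr
    intro u _
    simp [adj_comm]
  rw [this, card_neighborFinset_eq_degree]

lemma aes_sum_ite_deg (H : SimpleGraph V) [DecidableRel H.Adj] (z : V) :
    (∑ u : V, if H.Adj u z then 1 else 0) = H.degree z := by
  classical
  rw [← Finset.card_filter]
  have : (univ.filter fun u => H.Adj u z) = H.neighborFinset z := by
    rw [neighborFinset_eq_filter]
    apply Finset.filter_congr
    intro u _
    simp [adj_comm]
  rw [this, card_neighborFinset_eq_degree]

/-- The heart of the Andrásfai–Erdős–Sós theorem: a maximally `K_{m+3}`-free graph with large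
minimum degree contains no induced complement-of-`P₃`. -/
lemma aes_no_P3bar (H : SimpleGraph V) [DecidableRel H.Adj] (m : ℕ)
    (hmax : Maximal (fun K : SimpleGraph V => K.CliqueFree (m + 3)) H)
    (hdeg : ∀ x : V,
      (3 * (m : ℝ) + 2) * (Fintype.card V : ℝ) < (3 * (m : ℝ) + 5) * H.degree x)
    {v w₁ w₂ : V} (hw : H.Adj w₁ w₂) (h1 : ¬ H.Adj v w₁) (h2 : ¬ H.Adj v w₂) : False := by
  classical
  have hfree := hmax.prop
  have hvw₁ : v ≠ w₁ := by rintro rfl; exact h2 hw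
  have hvw₂ : v ≠ w₂ := by rintro rfl; exact h1 hw.symm
  obtain ⟨X₀, hX₀card, hX₀clq, hX₀adj⟩ := aes_common_clique H m hmax hvw₁ h1
  obtain ⟨Y₀, hY₀card, hY₀clq, hY₀adj⟩ := aes_common_clique H m hmax hvw₂ h2
  -- wheels: pairs of (m+1)-cliques in the joint neighbourhoods of (v,w₁) and (v,w₂)
  let W : Finset V × Finset V → Prop := fun p =>
    (p.1.card = m + 1 ∧ H.IsClique ↑p.1 ∧ ∀ x ∈ p.1, H.Adj v x ∧ H.Adj w₁ x) ∧
    (p.2.card = m + 1 ∧ H.IsClique ↑p.2 ∧ ∀ x ∈ p.2, H.Adj v x ∧ H.Adj w₂ x)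
  have hWne : ((univ : Finset (Finset V × Finset V)).filter W).Nonempty := by
    refine ⟨(X₀, Y₀), ?_⟩
    rw [mem_filter]
    exact ⟨mem_univ _, ⟨hX₀card, hX₀clq, hX₀adj⟩, ⟨hY₀card, hY₀clq, hY₀adj⟩⟩
  obtain ⟨⟨X, Y⟩, hXYmem, hmaxj⟩ :=
    Finset.exists_max_image _ (fun p : Finset V × Finset V => (p.1 ∩ p.2).card) hWne
  rw [mem_filter] at hXYmem
  obtain ⟨-, ⟨hXcard, hXclq, hXadj⟩, ⟨hYcard, hYclq, hYadj⟩⟩ := hXYmem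
  set j := (X ∩ Y).card with hjdef
  have hmaxj' : ∀ X' Y' : Finset V,
      (X'.card = m + 1 ∧ H.IsClique ↑X' ∧ ∀ x ∈ X', H.Adj v x ∧ H.Adj w₁ x) →
      (Y'.card = m + 1 ∧ H.IsClique ↑Y' ∧ ∀ x ∈ Y', H.Adj v x ∧ H.Adj w₂ x) →
      (X' ∩ Y').card ≤ j := by
    intro X' Y' hX' hY'
    exact hmaxj (X', Y') (by rw [mem_filter]; exact ⟨mem_univ _, hX', hY'⟩)
  -- basic non-memberships
  have hvX : v ∉ X := fun h => H.irrefl (hXadj v h).1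
  have hw₁X : w₁ ∉ X := fun h => h1 (hXadj w₁ h).1
  have hvY : v ∉ Y := fun h => H.irrefl (hYadj v h).1
  have hw₂Y : w₂ ∉ Y := fun h => h2 (hYadj w₂ h).1
  -- j ≤ m
  have hjm : j ≤ m := by
    by_contra hcon
    push_neg at hcon
    have hXYsub : X ∩ Y ⊆ X := inter_subset_left
    have hXY : X ∩ Y = X := by
      apply Finset.eq_of_subset_of_card_le hXYsub
      rw [hXcard, ← hjdef]
      omega
    have hXsubY : X ⊆ Y := by rw [← hXY]; exact inter_subset_right
    have hXeqY : X = Y := Finset.eq_of_subset_of_card_le hXsubY (by rw [hXcard, hYcard])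
    -- X ∪ {w₁, w₂} is an (m+3)-clique
    have hw₂X : w₂ ∉ X := by rw [hXeqY]; exact hw₂Y
    have hw₁ins : w₁ ∉ insert w₂ X := by
      rw [mem_insert]
      rintro (rfl | h)
      · exact H.irrefl hw
      · exact hw₁X h
    apply hfree (insert w₁ (insert w₂ X))
    constructor
    · rw [coe_insert, coe_insert]
      apply SimpleGraph.IsClique.insert
      · apply hXclq.insert
        intro b hb _
        rw [mem_coe, hXeqY] at hb
        exact (hYadj b hb).2
      · intro b hb _
        rw [Set.mem_insert_iff] at hb
        rcases hb with rfl | hb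
        · exact hw
        · exact (hXadj b (mem_coe.1 hb)).2
    · rw [card_insert_of_notMem hw₁ins, card_insert_of_notMem hw₂X, hXcard]
  -- the per-vertex cap
  have key : ∀ u : V,
      (X.filter (fun x => H.Adj u x)).card + (Y.filter (fun x => H.Adj u x)).card
      + ((X ∩ Y).filter (fun x => H.Adj u x)).card
      + ((if H.Adj u v then 1 else 0) + (if H.Adj u w₁ then 1 else 0)
          + (if H.Adj u w₂ then 1 else 0)) ≤ 2 * m + j + 2 := by
    intro u
    -- helper: clique + apex bound
    have hins : ∀ (z : V) (S : Finset V), z ∉ S → S.card = m + 1 → H.IsClique ↑S →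
        (∀ x ∈ S, H.Adj z x) →
        (S.filter (fun x => H.Adj u x)).card + (if H.Adj u z then 1 else 0) ≤ m + 1 := by
      intro z S hzS hScard hSclq hSadj
      have hCclq : H.IsClique ↑(insert z S) := by
        rw [coe_insert]
        apply hSclq.insert
        intro b hb _
        exact hSadj b (mem_coe.1 hb)
      have hCcard : (insert z S).card = m + 2 := by
        rw [card_insert_of_notMem hzS, hScard]
      have hcap := aes_clique_cap H m hfree u (insert z S) hCcard hCclq
      rw [Finset.filter_insert] at hcap
      by_cases hz : H.Adj u z
      · rw [if_pos hz] at hcap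
        rw [if_pos hz]
        have hznot : z ∉ S.filter (fun x => H.Adj u x) := fun h => hzS (mem_filter.1 h).1
        rw [card_insert_of_notMem hznot] at hcap
        omega
      · rw [if_neg hz] at hcap
        rw [if_neg hz]
        omega
    set a := (X.filter (fun x => H.Adj u x)).card with hadef
    set b := (Y.filter (fun x => H.Adj u x)).card with hbdef
    set k := ((X ∩ Y).filter (fun x => H.Adj u x)).card with hkdef
    have hA1 : a + (if H.Adj u v then 1 else 0) ≤ m + 1 := hins v X hvX hXcard hXclq
      (fun x hx => (hXadj x hx).1)
    have hA2 : a + (if H.Adj u w₁ then 1 else 0) ≤ m + 1 := hins w₁ X hw₁X hXcard hXclq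
      (fun x hx => (hXadj x hx).2)
    have hA3 : b + (if H.Adj u v then 1 else 0) ≤ m + 1 := hins v Y hvY hYcard hYclq
      (fun x hx => (hYadj x hx).1)
    have hA4 : b + (if H.Adj u w₂ then 1 else 0) ≤ m + 1 := hins w₂ Y hw₂Y hYcard hYclq
      (fun x hx => (hYadj x hx).2)
    have hkj : k ≤ j := hjdef ▸ Finset.card_le_card (filter_subset _ _)
    by_cases hkcase : k < j
    · have hB1 : (if H.Adj u w₁ then 1 else 0) ≤ 1 := by split <;> omega
      omega
    · -- k = j : u is adjacent to everything in X ∩ Y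
      have hkeq : k = j := by omega
      by_cases hB1 : H.Adj u w₁
      swap
      · rw [if_neg hB1]; omega
      by_cases hAv : H.Adj u v
      swap
      · rw [if_neg hAv]; rw [if_pos hB1]
        rw [if_pos hB1] at hA2
        omega
      by_cases hB2 : H.Adj u w₂
      swap
      · rw [if_neg hB2]; rw [if_pos hB1, if_pos hAv]
        rw [if_pos hB1] at hA2
        rw [if_pos hAv] at hA3
        omega
      rw [if_pos hB1, if_pos hAv, if_pos hB2]
      rw [if_pos hB1] at hA2
      rw [if_pos hAv] at hA3
      -- now a ≤ m and b ≤ m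
      have ham : a ≤ m := by omega
      have hbm : b ≤ m := by omega
      by_cases hextreme : a = m ∧ b = m
      swap
      · omega
      -- the swap case : build a better wheel
      exfalso
      obtain ⟨haeq, hbeq⟩ := hextreme
      -- u is adjacent to all of X ∩ Y
      have hKadj : ∀ x ∈ X ∩ Y, H.Adj u x := by
        have hEq : (X ∩ Y).filter (fun x => H.Adj u x) = X ∩ Y :=
          Finset.eq_of_subset_of_card_le (filter_subset _ _) (by omega)
        intro x hx
        rw [← hEq] at hx
        exact (mem_filter.1 hx).2
      -- unique non-neighbours x₀ ∈ X, y₀ ∈ Y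
      have hXsplit := Finset.card_filter_add_card_filter_not
        (s := X) (p := fun x => H.Adj u x)
      have hYsplit := Finset.card_filter_add_card_filter_not
        (s := Y) (p := fun x => H.Adj u x)
      have hXone : (X.filter (fun x => ¬ H.Adj u x)).card = 1 := by
        rw [hXcard] at hXsplit; omega
      have hYone : (Y.filter (fun x => ¬ H.Adj u x)).card = 1 := by
        rw [hYcard] at hYsplit; omega
      obtain ⟨x₀, hx₀⟩ := Finset.card_eq_one.1 hXone
      obtain ⟨y₀, hy₀⟩ := Finset.card_eq_one.1 hYone
      have hx₀mem : x₀ ∈ X.filter (fun x => ¬ H.Adj u x) := by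
        rw [hx₀]; exact mem_singleton_self x₀
      have hy₀mem : y₀ ∈ Y.filter (fun x => ¬ H.Adj u x) := by
        rw [hy₀]; exact mem_singleton_self y₀
      have hx₀X : x₀ ∈ X := (mem_filter.1 hx₀mem).1
      have hx₀n : ¬ H.Adj u x₀ := (mem_filter.1 hx₀mem).2
      have hy₀Y : y₀ ∈ Y := (mem_filter.1 hy₀mem).1
      have hy₀n : ¬ H.Adj u y₀ := (mem_filter.1 hy₀mem).2
      have hXrest : ∀ x ∈ X, x ≠ x₀ → H.Adj u x := by
        intro x hx hxx
        by_contra hnot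
        have : x ∈ X.filter (fun x => ¬ H.Adj u x) := mem_filter.2 ⟨hx, hnot⟩
        rw [hx₀, mem_singleton] at this
        exact hxx this
      have hYrest : ∀ y ∈ Y, y ≠ y₀ → H.Adj u y := by
        intro y hy hyy
        by_contra hnot
        have : y ∈ Y.filter (fun x => ¬ H.Adj u x) := mem_filter.2 ⟨hy, hnot⟩
        rw [hy₀, mem_singleton] at this
        exact hyy this
      have hx₀K : x₀ ∉ X ∩ Y := fun h => hx₀n (hKadj x₀ h)
      have hy₀K : y₀ ∉ X ∩ Y := fun h => hy₀n (hKadj y₀ h)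
      have huXe : u ∉ X.erase x₀ := by
        intro h
        rw [mem_erase] at h
        exact H.irrefl (hXrest u h.2 h.1)
      have huYe : u ∉ Y.erase y₀ := by
        intro h
        rw [mem_erase] at h
        exact H.irrefl (hYrest u h.2 h.1)
      -- the improved wheel
      set X' := insert u (X.erase x₀) with hX'def
      set Y' := insert u (Y.erase y₀) with hY'def
      have hX'good : X'.card = m + 1 ∧ H.IsClique ↑X' ∧ ∀ x ∈ X', H.Adj v x ∧ H.Adj w₁ x := by
        refine ⟨?_, ?_, ?_⟩
        · rw [card_insert_of_notMem huXe, card_erase_of_mem hx₀X, hXcard]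
          omega
        · rw [coe_insert]
          apply (hXclq.subset ?_).insert
          · intro c hc hcu
            rw [mem_coe, mem_erase] at hc
            exact hXrest c hc.2 hc.1
          · rw [coe_erase]
            exact Set.diff_subset
        · intro x hx
          rw [mem_insert] at hx
          rcases hx with rfl | hx
          · exact ⟨hAv.symm, hB1.symm⟩
          · exact hXadj x (mem_of_mem_erase hx)
      have hY'good : Y'.card = m + 1 ∧ H.IsClique ↑Y' ∧ ∀ x ∈ Y', H.Adj v x ∧ H.Adj w₂ x := by
        refine ⟨?_, ?_, ?_⟩
        · rw [card_insert_of_notMem huYe, card_erase_of_mem hy₀Y, hYcard]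
          omega
        · rw [coe_insert]
          apply (hYclq.subset ?_).insert
          · intro c hc hcu
            rw [mem_coe, mem_erase] at hc
            exact hYrest c hc.2 hc.1
          · rw [coe_erase]
            exact Set.diff_subset
        · intro x hx
          rw [mem_insert] at hx
          rcases hx with rfl | hx
          · exact ⟨hAv.symm, hB2.symm⟩
          · exact hYadj x (mem_of_mem_erase hx)
      have hsubXY' : insert u (X ∩ Y) ⊆ X' ∩ Y' := by
        intro z hz
        rw [mem_insert] at hz
        rw [mem_inter]
        rcases hz with rfl | hz
        · exact ⟨mem_insert_self _ _, mem_insert_self _ _⟩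
        · rw [mem_inter] at hz
          constructor
          · apply mem_insert_of_mem
            rw [mem_erase]
            exact ⟨fun h => hx₀K (h ▸ mem_inter.2 hz), hz.1⟩
          · apply mem_insert_of_mem
            rw [mem_erase]
            exact ⟨fun h => hy₀K (h ▸ mem_inter.2 hz), hz.2⟩
      have huK : u ∉ X ∩ Y := fun h => H.irrefl (hKadj u h)
      have hbig : j + 1 ≤ (X' ∩ Y').card := by
        have := Finset.card_le_card hsubXY'
        rw [card_insert_of_notMem huK] at this
        omega
      have := hmaxj' X' Y' hX'good hY'good
      omega
  -- summing up
  set n := Fintype.card V with hndef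
  have hsum_le : (∑ u : V, ((X.filter (fun x => H.Adj u x)).card
      + (Y.filter (fun x => H.Adj u x)).card
      + ((X ∩ Y).filter (fun x => H.Adj u x)).card
      + ((if H.Adj u v then 1 else 0) + (if H.Adj u w₁ then 1 else 0)
          + (if H.Adj u w₂ then 1 else 0)))) ≤ n * (2 * m + j + 2) := by
    calc (∑ u : V, ((X.filter (fun x => H.Adj u x)).card
        + (Y.filter (fun x => H.Adj u x)).card
        + ((X ∩ Y).filter (fun x => H.Adj u x)).card
        + ((if H.Adj u v then 1 else 0) + (if H.Adj u w₁ then 1 else 0)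
            + (if H.Adj u w₂ then 1 else 0))))
        ≤ ∑ _u : V, (2 * m + j + 2) := Finset.sum_le_sum (fun u _ => key u)
      _ = n * (2 * m + j + 2) := by rw [Finset.sum_const, card_univ, smul_eq_mul]
  have hsum_eq : (∑ u : V, ((X.filter (fun x => H.Adj u x)).card
      + (Y.filter (fun x => H.Adj u x)).card
      + ((X ∩ Y).filter (fun x => H.Adj u x)).card
      + ((if H.Adj u v then 1 else 0) + (if H.Adj u w₁ then 1 else 0)
          + (if H.Adj u w₂ then 1 else 0))))
      = (∑ x ∈ X, H.degree x) + (∑ x ∈ Y, H.degree x) + (∑ x ∈ X ∩ Y, H.degree x)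
        + (H.degree v + H.degree w₁ + H.degree w₂) := by
    rw [← aes_sum_filter_deg H X, ← aes_sum_filter_deg H Y, ← aes_sum_filter_deg H (X ∩ Y),
      ← aes_sum_ite_deg H v, ← aes_sum_ite_deg H w₁, ← aes_sum_ite_deg H w₂]
    rw [← Finset.sum_add_distrib, ← Finset.sum_add_distrib, ← Finset.sum_add_distrib,
      ← Finset.sum_add_distrib, ← Finset.sum_add_distrib]
  -- real-number bounds
  have hXsum : ((m : ℝ) + 1) * ((3 * (m : ℝ) + 2) * n)
      ≤ (3 * (m : ℝ) + 5) * (∑ x ∈ X, (H.degree x : ℝ)) := by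
    rw [Finset.mul_sum]
    calc ((m : ℝ) + 1) * ((3 * (m : ℝ) + 2) * n)
        = ∑ _x ∈ X, ((3 * (m : ℝ) + 2) * n) := by
          rw [Finset.sum_const, hXcard]; push_cast; ring
      _ ≤ ∑ x ∈ X, (3 * (m : ℝ) + 5) * (H.degree x : ℝ) :=
          Finset.sum_le_sum (fun x _ => le_of_lt (hdeg x))
  have hYsum : ((m : ℝ) + 1) * ((3 * (m : ℝ) + 2) * n)
      ≤ (3 * (m : ℝ) + 5) * (∑ x ∈ Y, (H.degree x : ℝ)) := by
    rw [Finset.mul_sum]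
    calc ((m : ℝ) + 1) * ((3 * (m : ℝ) + 2) * n)
        = ∑ _x ∈ Y, ((3 * (m : ℝ) + 2) * n) := by
          rw [Finset.sum_const, hYcard]; push_cast; ring
      _ ≤ ∑ x ∈ Y, (3 * (m : ℝ) + 5) * (H.degree x : ℝ) :=
          Finset.sum_le_sum (fun x _ => le_of_lt (hdeg x))
  have hKsum : (j : ℝ) * ((3 * (m : ℝ) + 2) * n)
      ≤ (3 * (m : ℝ) + 5) * (∑ x ∈ X ∩ Y, (H.degree x : ℝ)) := by
    rw [Finset.mul_sum]
    calc (j : ℝ) * ((3 * (m : ℝ) + 2) * n)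
        = ∑ _x ∈ X ∩ Y, ((3 * (m : ℝ) + 2) * n) := by
          rw [Finset.sum_const, ← hjdef]; push_cast; ring
      _ ≤ ∑ x ∈ X ∩ Y, (3 * (m : ℝ) + 5) * (H.degree x : ℝ) :=
          Finset.sum_le_sum (fun x _ => le_of_lt (hdeg x))
  -- combine
  have hNle : ((∑ x ∈ X, H.degree x) + (∑ x ∈ Y, H.degree x) + (∑ x ∈ X ∩ Y, H.degree x)
        + (H.degree v + H.degree w₁ + H.degree w₂) : ℝ) ≤ (2 * (m : ℝ) + j + 2) * n := by
    have h := hsum_eq ▸ hsum_le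
    have hcast : (((∑ x ∈ X, H.degree x) + (∑ x ∈ Y, H.degree x) + (∑ x ∈ X ∩ Y, H.degree x)
        + (H.degree v + H.degree w₁ + H.degree w₂) : ℕ) : ℝ) ≤ ((n * (2 * m + j + 2) : ℕ) : ℝ) :=
      Nat.cast_le.2 h
    push_cast at hcast ⊢
    linarith
  have hlower : (2 * (m : ℝ) + j + 5) * ((3 * (m : ℝ) + 2) * n)
      < (3 * (m : ℝ) + 5) * (((∑ x ∈ X, H.degree x) + (∑ x ∈ Y, H.degree x)
          + (∑ x ∈ X ∩ Y, H.degree x)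
          + (H.degree v + H.degree w₁ + H.degree w₂) : ℕ) : ℝ) := by
    have hv' := hdeg v
    have hw₁' := hdeg w₁
    have hw₂' := hdeg w₂
    push_cast
    push_cast at hXsum hYsum hKsum
    linarith
  have hupper : (3 * (m : ℝ) + 5) * (((∑ x ∈ X, H.degree x) + (∑ x ∈ Y, H.degree x)
          + (∑ x ∈ X ∩ Y, H.degree x)
          + (H.degree v + H.degree w₁ + H.degree w₂) : ℕ) : ℝ)
      ≤ (3 * (m : ℝ) + 5) * ((2 * (m : ℝ) + j + 2) * n) := by
    apply mul_le_mul_of_nonneg_left _ (by positivity)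
    push_cast
    push_cast at hNle
    linarith
  have hjmR : (j : ℝ) ≤ (m : ℝ) := Nat.cast_le.2 hjm
  have hnR : (0 : ℝ) ≤ (n : ℝ) := Nat.cast_nonneg n
  nlinarith [mul_nonneg (sub_nonneg.2 hjmR) hnR]

end MainAES

/-- Theorem (Andrásfai–Erdős–Sós): for `r ≥ 2`, every `K_{r+1}`-free simple graph on `n`
vertices with minimum degree greater than `((3r-4)/(3r-1))·n` is `r`-colourable. -/
theorem andrasfai_erdos_sos {V : Type*} [Fintype V] (r : ℕ) (hr : 2 ≤ r)
    (G : SimpleGraph V) [DecidableRel G.Adj]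
    (hfree : G.CliqueFree (r + 1))
    (hdeg : ∀ v : V,
      (3 * (r : ℝ) - 4) / (3 * (r : ℝ) - 1) * (Fintype.card V : ℝ) < G.degree v) :
    G.Colorable r := by
  classical
  obtain ⟨m, rfl⟩ : ∃ m, r = m + 2 := ⟨r - 2, by omega⟩
  have hfree' : G.CliqueFree (m + 3) := by
    have h3 : m + 2 + 1 = m + 3 := by omega
    rw [← h3]; exact hfree
  obtain ⟨H, hle, hHmax⟩ :=
    Finite.exists_le_maximal (p := fun K : SimpleGraph V => K.CliqueFree (m + 3)) hfree'
  haveI : DecidableRel H.Adj := Classical.decRel _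
  have hdegH : ∀ x : V,
      (3 * (m : ℝ) + 2) * (Fintype.card V : ℝ) < (3 * (m : ℝ) + 5) * H.degree x := by
    intro x
    have h0 := hdeg x
    have hGH : G.degree x ≤ H.degree x := by
      apply Finset.card_le_card
      intro y hy
      rw [mem_neighborFinset] at hy ⊢
      exact hle hy
    have hGHR : (G.degree x : ℝ) ≤ (H.degree x : ℝ) := Nat.cast_le.2 hGH
    have hrw : (3 * ((m : ℝ) + 2) - 4) = 3 * (m : ℝ) + 2 := by ring
    have hrw2 : (3 * ((m : ℝ) + 2) - 1) = 3 * (m : ℝ) + 5 := by ring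
    push_cast at h0
    rw [hrw, hrw2] at h0
    have hpos : (0 : ℝ) < 3 * (m : ℝ) + 5 := by positivity
    rw [div_mul_eq_mul_div, div_lt_iff₀ hpos] at h0
    calc (3 * (m : ℝ) + 2) * (Fintype.card V : ℝ)
        < (G.degree x : ℝ) * (3 * (m : ℝ) + 5) := h0
      _ = (3 * (m : ℝ) + 5) * (G.degree x : ℝ) := by ring
      _ ≤ (3 * (m : ℝ) + 5) * (H.degree x : ℝ) := by
          exact mul_le_mul_of_nonneg_left hGHR (by positivity)
  by_cases hP : ∃ a b c : V, H.Adj b c ∧ ¬ H.Adj a b ∧ ¬ H.Adj a c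
  · obtain ⟨a, b, c, hbc, hab, hac⟩ := hP
    exact absurd (aes_no_P3bar H m hHmax hdegH hbc hab hac) not_false
  · push_neg at hP
    have hcol : H.Colorable (m + 2) := by
      apply aes_colorable_of_no_P3bar H (m + 2) ?_
      swap
      · have h3 : m + 2 + 1 = m + 3 := by omega
        rw [h3]; exact hHmax.prop
      intro a b c hbc hab hac
      exact hac (hP a b c hbc hab)
    exact hcol.mono_left hle
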